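/- Burnside count for the pure reflection part: for m, n ≥ 1, (1/(4mn)) ∑_{i=0}^{m-1} ∑_{j=0}^{n-1} 2^{D_{ij}}, where D_{ij} is the number of cycles of the permutation (x,y) ↦ (i - 1 - x, j - 1 - y) of ZMod m × ZMod n, equals 2^((mn-3)/2) if m and n are both odd; 3·2^(mn/2 - 3) if exactly one of m, n is even; and 7·2^(mn/2 - 4) if both are even. -/

import Mathlib

lemma two_mul_card_quot {α : Type*} [Fintype α] [DecidableEq α] (σ : α → α)
    (hσ : ∀ x, σ (σ x) = x) :
    2 * Nat.card (Quot fun p q : α => q = σ p)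
      = Fintype.card α + Fintype.card {x : α // σ x = x} := by
  classical
  set s : Setoid α := ⟨fun a b => b = a ∨ b = σ a, by
    refine ⟨fun x => Or.inl rfl, ?_, ?_⟩
    · rintro x y (rfl | rfl)
      · exact Or.inl rfl
      · exact Or.inr (hσ x).symm
    · rintro x y z (rfl | rfl) h
      · exact h
      · rcases h with rfl | rfl
        · exact Or.inr rfl
        · exact Or.inl (hσ x)⟩ with hs
  haveI : DecidableRel s.r := fun a b => inferInstanceAs (Decidable (b = a ∨ b = σ a))
  have e : (Quot fun p q : α => q = σ p) ≃ Quotient s :=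
    { toFun := Quot.lift (Quotient.mk s) (fun a b h => Quotient.sound (Or.inr h))
      invFun := Quotient.lift (Quot.mk _) (fun a b h => by
        rcases h with rfl | rfl
        · rfl
        · exact Quot.sound rfl)
      left_inv := by rintro ⟨x⟩; rfl
      right_inv := by rintro ⟨x⟩; rfl }
  rw [Nat.card_congr e, Nat.card_eq_fintype_card]
  -- lifted fixed-point predicate
  have Pwd : ∀ a b : α, s.r a b → (σ a = a) = (σ b = b) := by
    rintro a b (rfl | rfl)
    · rfl
    · simp only [hσ, eq_iff_iff]
      constructor
      · intro h; rw [h]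
      · intro h; conv_lhs => rw [← h]
  set P : Quotient s → Prop := Quotient.lift (fun x => σ x = x) Pwd with hP
  haveI : DecidablePred P := fun c => Classical.propDecidable _
  have hfiber : ∀ c : Quotient s,
      (Finset.univ.filter fun x => Quotient.mk s x = c).card = if P c then 1 else 2 := by
    intro c
    induction c using Quotient.ind with
    | _ x =>
      have hfs : (Finset.univ.filter fun y => Quotient.mk s y = Quotient.mk s x)
          = ({x, σ x} : Finset α) := by
        ext y
        simp only [Finset.mem_filter, Finset.mem_univ, true_and, Finset.mem_insert,
          Finset.mem_singleton, Quotient.eq]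
        constructor
        · rintro (rfl | rfl)
          · exact Or.inl rfl
          · exact Or.inr ((hσ y).symm)
        · rintro (rfl | rfl)
          · exact Or.inl rfl
          · exact Or.inr (hσ x).symm
      rw [hfs]
      by_cases hx : σ x = x
      · have : P (Quotient.mk s x) := hx
        rw [if_pos this, hx]; simp
      · have : ¬ P (Quotient.mk s x) := hx
        rw [if_neg this, Finset.card_pair (fun h => hx h.symm)]
  have hcount : Fintype.card α
      = ∑ c : Quotient s, (Finset.univ.filter fun x => Quotient.mk s x = c).card := by
    rw [← Finset.card_univ]
    exact Finset.card_eq_sum_card_fiberwise (fun x _ => Finset.mem_univ _)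
  have hfix : (Finset.univ.filter P).card = Fintype.card {x : α // σ x = x} := by
    rw [Fintype.card_subtype]
    refine (Finset.card_bij (fun x _ => Quotient.mk s x) ?_ ?_ ?_).symm
    · intro x hx
      simp only [Finset.mem_filter, Finset.mem_univ, true_and] at hx ⊢
      exact hx
    · intro x hx y hy h
      simp only [Finset.mem_filter, Finset.mem_univ, true_and] at hx hy
      rcases Quotient.exact h with rfl | rfl
      · rfl
      · rw [hσ x] at hy; exact hy
    · intro c hc
      induction c using Quotient.ind with
      | _ x =>
        simp only [Finset.mem_filter, Finset.mem_univ, true_and] at hc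
        exact ⟨x, by simp only [Finset.mem_filter, Finset.mem_univ, true_and]; exact hc, rfl⟩
  rw [hcount, ← hfix]
  have : ∀ c : Quotient s, (if P c then 1 else 2) + (if P c then 1 else 0) = 2 := by
    intro c; by_cases h : P c <;> simp [h]
  calc 2 * Fintype.card (Quotient s)
      = ∑ c : Quotient s, ((if P c then 1 else 2) + (if P c then 1 else 0)) := by
        simp [this, Finset.sum_const, Finset.card_univ, mul_comm]
    _ = ∑ c : Quotient s, (if P c then 1 else 2) + ∑ c : Quotient s, (if P c then 1 else 0) :=
        Finset.sum_add_distrib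
    _ = (∑ c : Quotient s, (Finset.univ.filter fun x => Quotient.mk s x = c).card)
        + (Finset.univ.filter P).card := by
        rw [Finset.card_filter]
        congr 1
        exact Finset.sum_congr rfl (fun c _ => (hfiber c).symm)

lemma card_sol_odd {m : ℕ} (hm : Odd m) (c : ZMod m) :
    Nat.card {x : ZMod m // x + x = c} = 1 := by
  haveI : NeZero m := ⟨by rcases hm with ⟨k, rfl⟩; omega⟩
  have h2 : IsUnit (2 : ZMod m) := by
    have := (ZMod.isUnit_iff_coprime 2 m).2 (Nat.coprime_two_left.2 hm)
    simpa using this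
  obtain ⟨u, hu⟩ := h2
  have huniq : ∀ x : ZMod m, x + x = c ↔ x = ↑u⁻¹ * c := by
    intro x
    rw [← two_mul, ← hu]
    constructor
    · intro h
      have := congrArg (fun z => (↑u⁻¹ : ZMod m) * z) h
      simpa [← mul_assoc] using this
    · rintro rfl
      rw [← mul_assoc]
      simp
  have : {x : ZMod m // x + x = c} ≃ {x : ZMod m // x = ↑u⁻¹ * c} :=
    Equiv.subtypeEquivRight huniq
  rw [Nat.card_congr this, Nat.card_eq_fintype_card, Fintype.card_subtype_eq]

lemma card_sol_even {m : ℕ} (hm : Even m) (hm1 : 1 ≤ m) (i : ℕ) :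
    Nat.card {x : ZMod m // x + x = (i : ZMod m) - 1} = if Odd i then 2 else 0 := by
  haveI : NeZero m := ⟨by omega⟩
  obtain ⟨k, hk⟩ := hm
  have hk' : m = 2 * k := by omega
  have hk1 : 1 ≤ k := by omega
  set c : ZMod m := (i : ZMod m) - 1 with hc
  -- parity of (x+x).val : even
  have hval_even : ∀ x : ZMod m, (x + x).val % 2 = 0 := by
    intro x
    rw [ZMod.val_add, Nat.mod_mod_of_dvd _ ⟨k, hk'⟩]
    omega
  -- parity of c.val : c.val % 2 = (i+1) % 2
  have hcval : c.val % 2 = (i + 1) % 2 := by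
    have h1 : c + 1 = (i : ZMod m) := by rw [hc]; ring
    have h2 : (c + 1).val = (c.val + 1) % m := by
      rw [ZMod.val_add]
      simp [ZMod.val_one_eq_one_mod]
    have h3 : (c + 1).val = i % m := by rw [h1, ZMod.val_natCast]
    have h4 : c.val < m := ZMod.val_lt c
    have h5 : i % m % 2 = i % 2 := Nat.mod_mod_of_dvd _ ⟨k, hk'⟩
    rcases Nat.lt_or_ge (c.val + 1) m with h | h
    · rw [Nat.mod_eq_of_lt h] at h2
      omega
    · have h6 : c.val + 1 = m := by omega
      rw [h6, Nat.mod_self] at h2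
      omega
  by_cases hi : Odd i
  · rw [if_pos hi]
    -- solutions : x0 and x0 + k
    set x0 : ZMod m := (((i - 1) / 2 : ℕ) : ZMod m) with hx0
    have hx0sol : x0 + x0 = c := by
      rw [hx0, ← Nat.cast_add, hc]
      have : (i - 1) / 2 + (i - 1) / 2 = i - 1 := by
        rcases hi with ⟨t, rfl⟩; omega
      rw [this]
      have : ((i - 1 : ℕ) : ZMod m) = (i : ZMod m) - 1 := by
        have : 1 ≤ i := by rcases hi with ⟨t, rfl⟩; omega
        push_cast [Nat.cast_sub this]
        ring
      rw [this]
    have hkne : ((k : ℕ) : ZMod m) ≠ 0 := by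
      rw [Ne, ZMod.natCast_eq_zero_iff]
      intro hdvd
      have := Nat.le_of_dvd (by omega) hdvd
      omega
    have hker : ∀ y : ZMod m, y + y = 0 ↔ y = 0 ∨ y = (k : ZMod m) := by
      intro y
      constructor
      · intro h
        have hv : (y.val + y.val) % m = 0 := by
          rw [← ZMod.val_add, h, ZMod.val_zero]
        have hlt : y.val < m := ZMod.val_lt y
        have : y.val = 0 ∨ y.val = k := by
          rcases Nat.eq_zero_or_pos y.val with h0 | h0
          · exact Or.inl h0
          · right
            have : m ∣ y.val + y.val := Nat.dvd_of_mod_eq_zero hv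
            obtain ⟨t, ht⟩ := this
            rcases t with _ | _ | t
            · omega
            · omega
            · exfalso
              have h2 : m * 2 ≤ m * (t + 2) := Nat.mul_le_mul_left m (by omega)
              rw [← ht] at h2
              omega
        rcases this with h0 | h0
        · exact Or.inl (by rwa [ZMod.val_eq_zero] at h0)
        · right
          apply ZMod.val_injective
          rw [h0, ZMod.val_cast_of_lt (by omega)]
      · rintro (rfl | rfl)
        · simp
        · rw [← Nat.cast_add]
          have : ((k + k : ℕ) : ZMod m) = ((m : ℕ) : ZMod m) := by rw [show k + k = m by omega]
          rw [this, ZMod.natCast_self]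
    have hsols : {x : ZMod m | x + x = c} = {x0, x0 + (k : ZMod m)} := by
      ext x
      simp only [Set.mem_setOf_eq, Set.mem_insert_iff, Set.mem_singleton_iff]
      constructor
      · intro h
        have : (x - x0) + (x - x0) = 0 := by
          have := hx0sol
          rw [show (x - x0) + (x - x0) = (x + x) - (x0 + x0) by ring, h, this, sub_self]
        rcases (hker _).1 this with h0 | h0
        · left; rw [← sub_eq_zero]; exact h0
        · right; rw [← h0]; ring
      · rintro (rfl | rfl)
        · exact hx0sol
        · rw [show x0 + ↑k + (x0 + ↑k) = (x0 + x0) + (↑k + ↑k) by ring, hx0sol,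
            (hker _).2 (Or.inr rfl), add_zero]
    have hne : x0 ≠ x0 + (k : ZMod m) := by
      intro h
      apply hkne
      have := congrArg (fun z => z - x0) h
      simpa using this.symm
    have : Nat.card {x : ZMod m // x + x = c} = ({x : ZMod m | x + x = c} : Set (ZMod m)).ncard :=
      Nat.card_coe_set_eq _
    rw [this, hsols, Set.ncard_pair hne]
  · rw [if_neg hi]
    have : IsEmpty {x : ZMod m // x + x = c} := by
      refine ⟨fun ⟨x, hx⟩ => ?_⟩
      have h1 := hval_even x
      rw [hx] at h1
      rw [Nat.odd_iff] at hi
      omega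
    exact Nat.card_of_isEmpty

lemma key_card (m n : ℕ) [NeZero m] [NeZero n] (i j : ℕ) :
    2 * Nat.card (Quot (fun p q : ZMod m × ZMod n =>
      q = ((i : ZMod m) - 1 - p.1, (j : ZMod n) - 1 - p.2)))
    = m * n + Nat.card {x : ZMod m // x + x = (i : ZMod m) - 1}
        * Nat.card {y : ZMod n // y + y = (j : ZMod n) - 1} := by
  have h : 2 * Nat.card (Quot (fun p q : ZMod m × ZMod n =>
      q = ((i : ZMod m) - 1 - p.1, (j : ZMod n) - 1 - p.2)))
      = Fintype.card (ZMod m × ZMod n) + Fintype.card {p : ZMod m × ZMod n //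
          ((i : ZMod m) - 1 - p.1, (j : ZMod n) - 1 - p.2) = p} :=
    two_mul_card_quot (fun p : ZMod m × ZMod n =>
      ((i : ZMod m) - 1 - p.1, (j : ZMod n) - 1 - p.2)) (fun p => by simp)
  rw [h]
  congr 1
  · rw [Fintype.card_prod, ZMod.card, ZMod.card]
  · have e1 : {p : ZMod m × ZMod n // ((i:ZMod m)-1-p.1, (j:ZMod n)-1-p.2) = p}
        ≃ {x : ZMod m // x + x = (i:ZMod m)-1} × {y : ZMod n // y + y = (j:ZMod n)-1} := by
      refine (Equiv.subtypeEquivRight ?_).trans Equiv.subtypeProdEquivProd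
      intro p
      rw [Prod.ext_iff]
      constructor
      · rintro ⟨h1, h2⟩
        exact ⟨by linear_combination -h1, by linear_combination -h2⟩
      · rintro ⟨h1, h2⟩
        exact ⟨by linear_combination -h1, by linear_combination -h2⟩
    rw [← Nat.card_eq_fintype_card, Nat.card_congr e1, Nat.card_prod]

lemma sum_range_ite_odd (k : ℕ) (A B : ℚ) :
    ∑ i ∈ Finset.range (2 * k), (if Odd i then A else B) = k * A + k * B := by
  induction k with
  | zero => simp
  | succ t ih =>
    rw [show 2 * (t + 1) = (2 * t + 1) + 1 by ring, Finset.sum_range_succ,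
      Finset.sum_range_succ, ih]
    rw [if_pos (by rw [Nat.odd_iff]; omega : Odd (2 * t + 1)),
      if_neg (by rw [Nat.odd_iff]; omega : ¬ Odd (2 * t))]
    push_cast
    ring

theorem burnside_reflection_part (m n : ℕ) (hm : 1 ≤ m) (hn : 1 ≤ n) :
    (1 / (4 * m * n) : ℚ) * ∑ i ∈ Finset.range m, ∑ j ∈ Finset.range n,
        (2 : ℚ) ^ (Nat.card (Quot (fun p q : ZMod m × ZMod n =>
          q = ((i : ZMod m) - 1 - p.1, (j : ZMod n) - 1 - p.2))))
      = if Odd m ∧ Odd n then (2 : ℚ) ^ (((m * n : ℤ) - 3) / 2)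
        else if Even m ∧ Even n then 7 * (2 : ℚ) ^ ((m * n : ℤ) / 2 - 4)
        else 3 * (2 : ℚ) ^ ((m * n : ℤ) / 2 - 3) := by
  haveI : NeZero m := ⟨by omega⟩
  haveI : NeZero n := ⟨by omega⟩
  have hm0 : (m : ℚ) ≠ 0 := Nat.cast_ne_zero.2 (by omega)
  have hn0 : (n : ℚ) ≠ 0 := Nat.cast_ne_zero.2 (by omega)
  rcases Nat.even_or_odd m with hme | hmo
  · rcases Nat.even_or_odd n with hne | hno
    · -- both even
      obtain ⟨a, ha⟩ := hme
      obtain ⟨b, hb⟩ := hne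
      have ha' : m = 2 * a := by omega
      have hb' : n = 2 * b := by omega
      have ha1 : 1 ≤ a := by omega
      have hb1 : 1 ≤ b := by omega
      have ha0 : (a : ℚ) ≠ 0 := Nat.cast_ne_zero.2 (by omega)
      have hb0 : (b : ℚ) ≠ 0 := Nat.cast_ne_zero.2 (by omega)
      rw [if_neg (fun h => (fun ho => Nat.not_even_iff_odd.2 ho ⟨a, ha⟩) h.1),
        if_pos ⟨⟨a, ha⟩, ⟨b, hb⟩⟩]
      set d : ℕ := 2 * a * b with hd
      have hterm : ∀ i j : ℕ, (Nat.card (Quot (fun p q : ZMod m × ZMod n =>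
          q = ((i : ZMod m) - 1 - p.1, (j : ZMod n) - 1 - p.2))))
          = if Odd i ∧ Odd j then d + 2 else d := by
        intro i j
        have h := key_card m n i j
        rw [card_sol_even ⟨a, ha⟩ (by omega) i, card_sol_even ⟨b, hb⟩ (by omega) j] at h
        have hmn : m * n = 2 * d := by rw [ha', hb', hd]; ring
        by_cases hi : Odd i <;> by_cases hj : Odd j <;>
          simp only [hi, hj, if_true, if_false, and_true, and_false, true_and, false_and] at h ⊢ <;>
          omega
      have hstep : ∀ i j : ℕ, (2 : ℚ) ^ (Nat.card (Quot (fun p q : ZMod m × ZMod n =>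
          q = ((i : ZMod m) - 1 - p.1, (j : ZMod n) - 1 - p.2))))
          = if Odd j then (if Odd i then (2:ℚ)^(d+2) else 2^d) else 2^d := by
        intro i j
        rw [hterm i j]
        by_cases hi : Odd i <;> by_cases hj : Odd j <;> simp [hi, hj]
      have hsum : ∑ i ∈ Finset.range m, ∑ j ∈ Finset.range n,
          (2 : ℚ) ^ (Nat.card (Quot (fun p q : ZMod m × ZMod n =>
            q = ((i : ZMod m) - 1 - p.1, (j : ZMod n) - 1 - p.2))))
          = (b : ℚ) * ((a : ℚ) * 2^(d+2) + (a : ℚ) * 2^d) + (m : ℚ) * ((b : ℚ) * 2^d) := by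
        have hinner : ∀ i : ℕ, ∑ j ∈ Finset.range n,
            (2 : ℚ) ^ (Nat.card (Quot (fun p q : ZMod m × ZMod n =>
              q = ((i : ZMod m) - 1 - p.1, (j : ZMod n) - 1 - p.2))))
            = (b : ℚ) * (if Odd i then (2:ℚ)^(d+2) else 2^d) + (b : ℚ) * 2^d := by
          intro i
          rw [Finset.sum_congr rfl fun j _ => hstep i j,
            show Finset.range n = Finset.range (2 * b) from by rw [hb'],
            sum_range_ite_odd]
        rw [Finset.sum_congr rfl fun i _ => hinner i, Finset.sum_add_distrib,
          ← Finset.mul_sum, Finset.sum_const, Finset.card_range, nsmul_eq_mul,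
          show Finset.range m = Finset.range (2 * a) from by rw [ha'],
          sum_range_ite_odd]
      rw [hsum]
      have hexp : ((m : ℤ) * n) / 2 - 4 = (d : ℤ) - 4 := by
        have h1 : ((m : ℤ) * n) = 2 * (d : ℤ) := by
          rw [ha', hb', hd]; push_cast; ring
        rw [h1, Int.mul_ediv_cancel_left _ (by norm_num)]
      rw [hexp, zpow_sub₀ (by norm_num : (2:ℚ) ≠ 0), zpow_natCast]
      have hm2 : (m : ℚ) = 2 * a := by rw [ha']; push_cast; ring
      have hn2 : (n : ℚ) = 2 * b := by rw [hb']; push_cast; ring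
      rw [hm2, hn2]
      have : (2:ℚ) ^ (d + 2) = 4 * 2 ^ d := by ring
      rw [this]
      have hpow : (2:ℚ) ^ d ≠ 0 := by positivity
      field_simp
      ring
    · -- m even, n odd
      obtain ⟨a, ha⟩ := hme
      have ha' : m = 2 * a := by omega
      have ha1 : 1 ≤ a := by omega
      have ha0 : (a : ℚ) ≠ 0 := Nat.cast_ne_zero.2 (by omega)
      rw [if_neg (fun h => (fun ho => Nat.not_even_iff_odd.2 ho ⟨a, ha⟩) h.1),
        if_neg (fun h => (fun ho => Nat.not_even_iff_odd.2 ho h.2) hno)]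
      set d : ℕ := a * n with hd
      have hterm : ∀ i j : ℕ, (Nat.card (Quot (fun p q : ZMod m × ZMod n =>
          q = ((i : ZMod m) - 1 - p.1, (j : ZMod n) - 1 - p.2))))
          = if Odd i then d + 1 else d := by
        intro i j
        have h := key_card m n i j
        rw [card_sol_even ⟨a, ha⟩ (by omega) i, card_sol_odd hno] at h
        have hmn : m * n = 2 * d := by rw [ha', hd]; ring
        by_cases hi : Odd i <;> simp only [hi, if_true, if_false] at h ⊢ <;> omega
      have hsum : ∑ i ∈ Finset.range m, ∑ j ∈ Finset.range n,
          (2 : ℚ) ^ (Nat.card (Quot (fun p q : ZMod m × ZMod n =>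
            q = ((i : ZMod m) - 1 - p.1, (j : ZMod n) - 1 - p.2))))
          = (n : ℚ) * ((a : ℚ) * 2^(d+1) + (a : ℚ) * 2^d) := by
        have hinner : ∀ i : ℕ, ∑ j ∈ Finset.range n,
            (2 : ℚ) ^ (Nat.card (Quot (fun p q : ZMod m × ZMod n =>
              q = ((i : ZMod m) - 1 - p.1, (j : ZMod n) - 1 - p.2))))
            = (n : ℚ) * (if Odd i then (2:ℚ)^(d+1) else 2^d) := by
          intro i
          rw [Finset.sum_congr rfl fun j _ => by
            rw [hterm i j, apply_ite (fun t : ℕ => (2:ℚ) ^ t)],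
            Finset.sum_const, Finset.card_range, nsmul_eq_mul]
        rw [Finset.sum_congr rfl fun i _ => hinner i, ← Finset.mul_sum,
          show Finset.range m = Finset.range (2 * a) from by rw [ha'],
          sum_range_ite_odd]
      rw [hsum]
      have hexp : ((m : ℤ) * n) / 2 - 3 = (d : ℤ) - 3 := by
        have h1 : ((m : ℤ) * n) = 2 * (d : ℤ) := by
          rw [ha', hd]; push_cast; ring
        rw [h1, Int.mul_ediv_cancel_left _ (by norm_num)]
      rw [hexp, zpow_sub₀ (by norm_num : (2:ℚ) ≠ 0), zpow_natCast]
      have hm2 : (m : ℚ) = 2 * a := by rw [ha']; push_cast; ring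
      rw [hm2]
      have : (2:ℚ) ^ (d + 1) = 2 * 2 ^ d := by ring
      rw [this]
      have hpow : (2:ℚ) ^ d ≠ 0 := by positivity
      field_simp
      ring
  · rcases Nat.even_or_odd n with hne | hno
    · -- m odd, n even
      obtain ⟨b, hb⟩ := hne
      have hb' : n = 2 * b := by omega
      have hb1 : 1 ≤ b := by omega
      have hb0 : (b : ℚ) ≠ 0 := Nat.cast_ne_zero.2 (by omega)
      rw [if_neg (fun h => (fun ho => Nat.not_even_iff_odd.2 ho ⟨b, hb⟩) h.2),
        if_neg (fun h => (fun ho => Nat.not_even_iff_odd.2 ho h.1) hmo)]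
      set d : ℕ := m * b with hd
      have hterm : ∀ i j : ℕ, (Nat.card (Quot (fun p q : ZMod m × ZMod n =>
          q = ((i : ZMod m) - 1 - p.1, (j : ZMod n) - 1 - p.2))))
          = if Odd j then d + 1 else d := by
        intro i j
        have h := key_card m n i j
        rw [card_sol_even ⟨b, hb⟩ (by omega) j, card_sol_odd hmo] at h
        have hmn : m * n = 2 * d := by rw [hb', hd]; ring
        by_cases hj : Odd j <;> simp only [hj, if_true, if_false] at h ⊢ <;> omega
      have hsum : ∑ i ∈ Finset.range m, ∑ j ∈ Finset.range n,
          (2 : ℚ) ^ (Nat.card (Quot (fun p q : ZMod m × ZMod n =>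
            q = ((i : ZMod m) - 1 - p.1, (j : ZMod n) - 1 - p.2))))
          = (m : ℚ) * ((b : ℚ) * 2^(d+1) + (b : ℚ) * 2^d) := by
        have hinner : ∀ i : ℕ, ∑ j ∈ Finset.range n,
            (2 : ℚ) ^ (Nat.card (Quot (fun p q : ZMod m × ZMod n =>
              q = ((i : ZMod m) - 1 - p.1, (j : ZMod n) - 1 - p.2))))
            = (b : ℚ) * 2^(d+1) + (b : ℚ) * 2^d := by
          intro i
          rw [Finset.sum_congr rfl fun j _ => by
            rw [hterm i j, apply_ite (fun t : ℕ => (2:ℚ) ^ t)],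
            show Finset.range n = Finset.range (2 * b) from by rw [hb'],
            sum_range_ite_odd]
        rw [Finset.sum_congr rfl fun i _ => hinner i,
          Finset.sum_const, Finset.card_range, nsmul_eq_mul]
      rw [hsum]
      have hexp : ((m : ℤ) * n) / 2 - 3 = (d : ℤ) - 3 := by
        have h1 : ((m : ℤ) * n) = 2 * (d : ℤ) := by
          rw [hb', hd]; push_cast; ring
        rw [h1, Int.mul_ediv_cancel_left _ (by norm_num)]
      rw [hexp, zpow_sub₀ (by norm_num : (2:ℚ) ≠ 0), zpow_natCast]
      have hn2 : (n : ℚ) = 2 * b := by rw [hb']; push_cast; ring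
      rw [hn2]
      have : (2:ℚ) ^ (d + 1) = 2 * 2 ^ d := by ring
      rw [this]
      have hpow : (2:ℚ) ^ d ≠ 0 := by positivity
      field_simp
      ring
    · -- both odd
      rw [if_pos ⟨hmo, hno⟩]
      set d : ℕ := (m * n + 1) / 2 with hd
      have hp : m * n % 2 = 1 := Nat.odd_iff.1 (hmo.mul hno)
      have hterm : ∀ i j : ℕ, (Nat.card (Quot (fun p q : ZMod m × ZMod n =>
          q = ((i : ZMod m) - 1 - p.1, (j : ZMod n) - 1 - p.2)))) = d := by
        intro i j
        have h := key_card m n i j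
        rw [card_sol_odd hmo, card_sol_odd hno] at h
        omega
      have hsum : ∑ i ∈ Finset.range m, ∑ j ∈ Finset.range n,
          (2 : ℚ) ^ (Nat.card (Quot (fun p q : ZMod m × ZMod n =>
            q = ((i : ZMod m) - 1 - p.1, (j : ZMod n) - 1 - p.2))))
          = (m : ℚ) * ((n : ℚ) * 2 ^ d) := by
        rw [Finset.sum_congr rfl fun i _ => Finset.sum_congr rfl fun j _ => by rw [hterm i j]]
        simp [Finset.sum_const, Finset.card_range, nsmul_eq_mul]
      rw [hsum]
      have hexp : ((m : ℤ) * n - 3) / 2 = (d : ℤ) - 2 := by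
        have h2 : 2 * d = m * n + 1 := by omega
        have h3 : ((m : ℤ) * n) = 2 * (d : ℤ) - 1 := by
          have : ((m * n : ℕ) : ℤ) = 2 * (d : ℤ) - 1 := by push_cast; omega
          push_cast at this
          linarith
        rw [h3]
        omega
      rw [hexp, zpow_sub₀ (by norm_num : (2:ℚ) ≠ 0), zpow_natCast]
      have hpow : (2:ℚ) ^ d ≠ 0 := by positivity
      field_simp
      ring
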